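/- Let Γ(x,y) = c(n)|x−y|^{2−n} be the fundamental solution of the Laplacian on ℝ^n, n ≥ 3, and for y ≠ 0 expand Γ(·,y) at 0 as Γ(x,y) = Σ_k Γ_k(y) P_{y,k}(x) where P_{y,k} are homogeneous harmonic polynomials of degree k normalized by ⨍_{∂B_1} P_{y,k}^2 = 1. Then |Γ_k(y)| ≤ c(n) (4/3)^k |y|^{2−n−k} for every k ≥ 0. -/

import Mathlib

open MeasureTheory Metric
open Filter

lemma slit_aux {R b : ℝ} (hR : 0 < R) (hb : |b| ≤ R) {z : ℂ}
    (hz : ‖z‖ < R) :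
    z^2 - 2*(b:ℂ)*z + (R:ℂ)^2 ∈ Complex.slitPlane := by
  rw [Complex.mem_slitPlane_iff]
  by_contra h
  push_neg at h
  obtain ⟨h1, h2⟩ := h
  have hre : (z^2 - 2*(b:ℂ)*z + (R:ℂ)^2).re = z.re^2 - z.im^2 - 2*b*z.re + R^2 := by
    simp [pow_two, Complex.mul_re, Complex.mul_im]
    try ring
  have him : (z^2 - 2*(b:ℂ)*z + (R:ℂ)^2).im = 2*z.im*(z.re - b) := by
    simp [pow_two, Complex.mul_re, Complex.mul_im]
    try ring
  rw [hre] at h1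
  rw [him] at h2
  have habs : z.re^2 + z.im^2 < R^2 := by
    have := Complex.sq_norm z
    rw [Complex.normSq_apply] at this
    nlinarith [norm_nonneg z]
  have hb2 : b^2 ≤ R^2 := by nlinarith [abs_nonneg b, neg_abs_le b, le_abs_self b]
  rcases mul_eq_zero.mp (by linarith : z.im * (z.re - b) = 0) with hv | hu
  · rw [hv] at h1 habs
    nlinarith [sq_nonneg (z.re - b), sq_nonneg (R - z.re), sq_nonneg (R + z.re)]
  · have : z.re = b := by linarith
    rw [this] at h1 habs
    nlinarith

lemma abs_Q_lower {R b : ℝ} (hR : 0 < R) (hb : |b| ≤ R) {z : ℂ}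
    (hz : ‖z‖ = 3*R/4) :
    (R/4)^2 ≤ ‖z^2 - 2*(b:ℂ)*z + (R:ℂ)^2‖ := by
  set s : ℝ := Real.sqrt (R^2 - b^2) with hs
  have hb2 : b^2 ≤ R^2 := by nlinarith [abs_nonneg b, neg_abs_le b, le_abs_self b]
  have hs2 : s^2 = R^2 - b^2 := Real.sq_sqrt (by linarith)
  set w : ℂ := (b:ℂ) + (s:ℂ)*Complex.I with hw
  have habsw : ‖w‖ = R := by
    have : Complex.normSq w = R^2 := by
      rw [hw, Complex.normSq_add_mul_I]; linarith
    rw [Complex.norm_def, this]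
    exact Real.sqrt_sq hR.le
  have hconj : (starRingEnd ℂ) w = (b:ℂ) - (s:ℂ)*Complex.I := by
    rw [hw]; simp [Complex.conj_ofReal]; ring
  have hfact : z^2 - 2*(b:ℂ)*z + (R:ℂ)^2 = (z - w) * (z - (starRingEnd ℂ) w) := by
    have h1 : w + (starRingEnd ℂ) w = 2*(b:ℂ) := by rw [hw, hconj]; ring
    have h2 : w * (starRingEnd ℂ) w = (R:ℂ)^2 := by
      rw [Complex.mul_conj, hw, Complex.normSq_add_mul_I]
      rw [show b^2 + s^2 = R^2 by linarith]
      push_cast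
      ring
    calc z^2 - 2*(b:ℂ)*z + (R:ℂ)^2
        = z^2 - (w + (starRingEnd ℂ) w)*z + w * (starRingEnd ℂ) w := by rw [h1, h2]
      _ = (z - w) * (z - (starRingEnd ℂ) w) := by ring
  rw [hfact, norm_mul]
  have hzw : R/4 ≤ ‖z - w‖ := by
    have := norm_sub_norm_le w z
    rw [norm_sub_rev] at this
    rw [habsw, hz] at this
    linarith
  have hzw' : R/4 ≤ ‖z - (starRingEnd ℂ) w‖ := by
    have h3 : ‖(starRingEnd ℂ) w‖ = R := by rw [Complex.norm_conj, habsw]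
    have := norm_sub_norm_le ((starRingEnd ℂ) w) z
    rw [norm_sub_rev] at this
    rw [h3, hz] at this
    linarith
  calc (R/4)^2 = (R/4) * (R/4) := by ring
    _ ≤ _ := mul_le_mul hzw hzw' (by linarith) (norm_nonneg _)

lemma coeff_bound {R b e c : ℝ} (hR : 0 < R) (hb : |b| ≤ R) (he : e ≤ 0)
    (hc : 0 < c) (a : ℕ → ℝ)
    (hsum : ∀ r : ℝ, 0 < r → r < R → Summable (fun j => a j * r ^ j))
    (heq : ∀ r : ℝ, 0 < r → r < R → c * (r^2 - 2*b*r + R^2) ^ e = ∑' j, a j * r ^ j) :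
    ∀ k, |a k| ≤ (c * ((R/4)^2) ^ e) * (4/(3*R))^k := by
  classical
  set ρ : ℝ := 3*R/4 with hρdef
  have hρpos : 0 < ρ := by positivity
  have hρR : ρ < R := by rw [hρdef]; linarith
  set ρnn : NNReal := ⟨ρ, hρpos.le⟩ with hρnn
  have hρnncoe : (ρnn : ℝ) = ρ := rfl
  -- the complex extension
  set G : ℂ → ℂ := fun z => (c:ℂ) * (z^2 - 2*(b:ℂ)*z + (R:ℂ)^2) ^ ((e:ℝ):ℂ) with hG
  have hd : ∀ z : ℂ, ‖z‖ < R → DifferentiableAt ℂ G z := by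
    intro z hz
    apply DifferentiableAt.const_mul
    exact DifferentiableAt.cpow (by fun_prop) (differentiableAt_const _)
      (slit_aux hR hb hz)
  -- power series of G on ball ρ
  have hdon : DifferentiableOn ℂ G (closedBall 0 (ρnn : ℝ)) := by
    intro z hz
    refine (hd z ?_).differentiableWithinAt
    rw [mem_closedBall_zero_iff] at hz
    calc ‖z‖ = ‖z‖ := rfl
      _ ≤ ρ := hz
      _ < R := hρR
  have hGball : HasFPowerSeriesOnBall G (cauchyPowerSeries G 0 (ρnn : ℝ)) 0 ρnn :=
    hdon.hasFPowerSeriesOnBall (by exact_mod_cast hρpos)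
  set p := cauchyPowerSeries G 0 (ρnn : ℝ) with hp
  -- values of G on positive reals
  have hQpos : ∀ r : ℝ, 0 < r → r < R → 0 < r^2 - 2*b*r + R^2 := by
    intro r hr hrR
    nlinarith [sq_nonneg (R - r), le_abs_self b, neg_abs_le b]
  have hGreal : ∀ r : ℝ, 0 < r → r < R →
      G (r:ℂ) = ((c * (r^2 - 2*b*r + R^2) ^ e : ℝ) : ℂ) := by
    intro r hr hrR
    simp only [hG]
    have hcast : ((r:ℂ))^2 - 2*(b:ℂ)*(r:ℂ) + (R:ℂ)^2 = ((r^2 - 2*b*r + R^2 : ℝ) : ℂ) := by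
      push_cast; ring
    rw [hcast, ← Complex.ofReal_cpow (hQpos r hr hrR).le e]
    push_cast
    ring
  -- the scalar power series
  set q := FormalMultilinearSeries.ofScalars ℂ (fun j => ((a j : ℝ) : ℂ)) with hq
  have hqnorm : ∀ j, ‖q j‖ ≤ |a j| := by
    intro j
    rw [hq, FormalMultilinearSeries.ofScalars]
    refine le_trans (ContinuousMultilinearMap.opNorm_smul_le _ _) ?_
    rw [ContinuousMultilinearMap.norm_mkPiAlgebraFin]
    simp [Complex.norm_real]
  set r₁ : ℝ := 7*R/8 with hr₁def
  have hr₁pos : 0 < r₁ := by positivity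
  have hr₁R : r₁ < R := by rw [hr₁def]; linarith
  have hρr₁ : ρ < r₁ := by rw [hρdef, hr₁def]; linarith
  have hqsummable : Summable fun j => ‖q j‖ * r₁ ^ j := by
    refine Summable.of_nonneg_of_le (fun j => by positivity) (fun j => ?_)
      (((hsum r₁ hr₁pos hr₁R).abs).congr (fun j => ?_) :
        Summable fun j => |a j| * r₁ ^ j)
    · exact mul_le_mul_of_nonneg_right (hqnorm j) (by positivity)
    · rw [abs_mul, abs_pow, abs_of_pos hr₁pos]
  have hqradius : (r₁.toNNReal : ENNReal) ≤ q.radius := by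
    apply FormalMultilinearSeries.le_radius_of_summable_norm
    convert hqsummable using 3
    rw [Real.coe_toNNReal _ hr₁pos.le]
  have hq0 : 0 < q.radius := by
    refine lt_of_lt_of_le ?_ hqradius
    exact_mod_cast Real.toNNReal_pos.mpr hr₁pos
  have hqball : HasFPowerSeriesOnBall q.sum q 0 q.radius :=
    q.hasFPowerSeriesOnBall hq0
  -- q.sum on positive reals
  have hqsum_real : ∀ r : ℝ, q.sum (r:ℂ) = ((∑' j, a j * r ^ j : ℝ) : ℂ) := by
    intro r
    rw [FormalMultilinearSeries.sum, Complex.ofReal_tsum]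
    refine tsum_congr fun j => ?_
    rw [hq, FormalMultilinearSeries.ofScalars_apply_eq, smul_eq_mul]
    push_cast
    ring
  -- identity theorem on ball ρ
  have hUsub : ball (0:ℂ) ρ ⊆ Metric.eball (0:ℂ) q.radius := by
    intro z hz
    rw [mem_ball_zero_iff] at hz
    rw [Metric.mem_eball, edist_zero_right]
    refine lt_of_lt_of_le ?_ hqradius
    rw [← ofReal_norm, ENNReal.ofReal]
    exact_mod_cast Real.toNNReal_lt_toNNReal_iff hr₁pos |>.mpr (hz.trans hρr₁)
  have hGanal : AnalyticOnNhd ℂ G (ball (0:ℂ) ρ) := by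
    refine DifferentiableOn.analyticOnNhd (fun z hz => ?_) isOpen_ball
    rw [mem_ball_zero_iff] at hz
    exact (hd z (hz.trans hρR)).differentiableWithinAt
  have hqanal : AnalyticOnNhd ℂ q.sum (ball (0:ℂ) ρ) := by
    refine DifferentiableOn.analyticOnNhd ?_ isOpen_ball
    exact (hqball.differentiableOn.mono hUsub)
  have hagree_seq : ∀ m : ℕ, G ((((ρ/2)/(m+1) : ℝ)) : ℂ) = q.sum ((((ρ/2)/(m+1) : ℝ)) : ℂ) := by
    intro m
    have hrpos : 0 < (ρ/2)/(m+1 : ℝ) := by positivity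
    have hrR : (ρ/2)/(m+1 : ℝ) < R := by
      have h1 : (ρ/2)/(m+1 : ℝ) ≤ ρ/2 := by
        apply div_le_self (by positivity)
        have : (0:ℝ) ≤ m := Nat.cast_nonneg m
        linarith
      linarith
    rw [hGreal _ hrpos hrR, hqsum_real, heq _ hrpos hrR]
  have htend : Tendsto (fun m : ℕ => ((((ρ/2)/(m+1) : ℝ)) : ℂ)) atTop (nhdsWithin 0 {(0:ℂ)}ᶜ) := by
    apply tendsto_nhdsWithin_of_tendsto_nhds_of_eventually_within
    · have h0 : Tendsto (fun m : ℕ => ((ρ/2)/(m+1) : ℝ)) atTop (nhds 0) := by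
        have := tendsto_one_div_add_atTop_nhds_zero_nat.const_mul (ρ/2)
        rw [mul_zero] at this
        convert this using 2 with m
        field_simp
      have h1 := (Complex.continuous_ofReal.tendsto 0).comp h0
      rw [show ((0:ℝ):ℂ) = (0:ℂ) by norm_num] at h1
      exact h1
    · refine Filter.Eventually.of_forall fun m => ?_
      simp only [Set.mem_compl_iff, Set.mem_singleton_iff]
      have : (0:ℝ) < (ρ/2)/(m+1 : ℝ) := by positivity
      exact_mod_cast ne_of_gt (by exact_mod_cast this : (0:ℝ) < ((ρ/2)/(m+1) : ℝ))
  have hfreq : ∃ᶠ z in nhdsWithin (0:ℂ) {(0:ℂ)}ᶜ, G z = q.sum z :=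
    htend.frequently (Filter.Eventually.frequently (Filter.Eventually.of_forall hagree_seq))
  have hEq : Set.EqOn G q.sum (ball (0:ℂ) ρ) :=
    hGanal.eqOn_of_preconnected_of_frequently_eq hqanal
      (convex_ball (0:ℂ) ρ).isPreconnected (mem_ball_self hρpos) hfreq
  -- equality of power series
  have hpq : p = q := by
    refine HasFPowerSeriesAt.eq_formalMultilinearSeries_of_eventually
      hGball.hasFPowerSeriesAt hqball.hasFPowerSeriesAt ?_
    exact Filter.eventually_of_mem (ball_mem_nhds 0 hρpos) hEq
  -- Cauchy estimate
  intro k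
  set M : ℝ := c * ((R/4)^2) ^ e with hM
  have hGnorm : ∀ θ : ℝ, ‖G (circleMap 0 (ρnn:ℝ) θ)‖ ≤ M := by
    intro θ
    set z := circleMap 0 (ρnn:ℝ) θ with hz
    have habsz : ‖z‖ = ρ := by
      rw [hz, norm_circleMap_zero, hρnncoe, abs_of_pos hρpos]
    have hQlow : (R/4)^2 ≤ ‖z^2 - 2*(b:ℂ)*z + (R:ℂ)^2‖ := by
      apply abs_Q_lower hR hb
      rw [habsz]
    have hQne : z^2 - 2*(b:ℂ)*z + (R:ℂ)^2 ≠ 0 := by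
      intro h0
      rw [h0, norm_zero] at hQlow
      nlinarith
    rw [hG]
    simp only [norm_mul, Complex.norm_real, Real.norm_eq_abs, abs_of_pos hc]
    rw [Complex.norm_cpow_of_ne_zero hQne]
    simp only [Complex.ofReal_re, Complex.ofReal_im, mul_zero, Real.exp_zero, div_one]
    rw [hM]
    apply mul_le_mul_of_nonneg_left _ hc.le
    exact Real.rpow_le_rpow_of_nonpos (by positivity) hQlow he
  have hcont : Continuous fun θ : ℝ => ‖G (circleMap 0 (ρnn:ℝ) θ)‖ := by
    apply Continuous.norm
    have hGcont : ContinuousOn G (ball (0:ℂ) R) := by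
      intro z hz
      rw [mem_ball_zero_iff] at hz
      exact (hd z hz).continuousAt.continuousWithinAt
    refine hGcont.comp_continuous (continuous_circleMap 0 (ρnn:ℝ)) fun θ => ?_
    rw [mem_ball_zero_iff]
    show ‖_‖ < R
    rw [norm_circleMap_zero, hρnncoe, abs_of_pos hρpos]
    exact hρR
  have hint : (2*Real.pi)⁻¹ * ∫ θ : ℝ in (0)..2*Real.pi, ‖G (circleMap 0 (ρnn:ℝ) θ)‖ ≤ M := by
    have h2pi : (0:ℝ) < 2*Real.pi := Real.two_pi_pos
    have hile : ∫ θ : ℝ in (0)..2*Real.pi, ‖G (circleMap 0 (ρnn:ℝ) θ)‖ ≤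
        ∫ _ : ℝ in (0)..2*Real.pi, M := by
      apply intervalIntegral.integral_mono_on h2pi.le
        (hcont.intervalIntegrable _ _) (intervalIntegrable_const)
      exact fun θ _ => hGnorm θ
    rw [intervalIntegral.integral_const, smul_eq_mul] at hile
    calc (2*Real.pi)⁻¹ * ∫ θ : ℝ in (0)..2*Real.pi, ‖G (circleMap 0 (ρnn:ℝ) θ)‖
        ≤ (2*Real.pi)⁻¹ * ((2*Real.pi - 0) * M) := by
          apply mul_le_mul_of_nonneg_left hile (by positivity)
      _ = M := by rw [sub_zero]; field_simp
  have hnormp : ‖q k‖ ≤ M * |(ρnn:ℝ)|⁻¹ ^ k := by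
    rw [← hpq, hp]
    refine le_trans (norm_cauchyPowerSeries_le G 0 (ρnn:ℝ) k) ?_
    exact mul_le_mul_of_nonneg_right hint (by positivity)
  have hak : |a k| ≤ ‖q k‖ := by
    have happ := ContinuousMultilinearMap.le_opNorm (q k) (fun _ => (1:ℂ))
    rw [hq, FormalMultilinearSeries.ofScalars_apply_eq] at happ
    simp only [one_pow, smul_eq_mul, mul_one, norm_one, Finset.prod_const_one, mul_one] at happ
    rwa [Complex.norm_real, Real.norm_eq_abs] at happ
  refine le_trans hak (le_trans hnormp ?_)
  have hρinv : |(ρnn:ℝ)|⁻¹ = 4/(3*R) := by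
    rw [hρnncoe, abs_of_pos hρpos, hρdef]
    field_simp
  rw [hρinv, hM]

lemma exists_sq_ge_one {n : ℕ} (hn : 3 ≤ n) {P : EuclideanSpace ℝ (Fin n) → ℝ}
    (hP : Continuous P)
    (hnorm : (⨍ z in sphere (0 : EuclideanSpace ℝ (Fin n)) 1, (P z) ^ 2
        ∂(μH[(n : ℝ) - 1])) = 1) :
    ∃ θ ∈ sphere (0 : EuclideanSpace ℝ (Fin n)) 1, 1 ≤ (P θ)^2 := by
  classical
  by_contra h
  push_neg at h
  set μ : Measure (EuclideanSpace ℝ (Fin n)) := μH[(n : ℝ) - 1] with hμ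
  set S := sphere (0 : EuclideanSpace ℝ (Fin n)) 1 with hS
  rw [setAverage_eq, measureReal_def] at hnorm
  haveI hnt : Nontrivial (EuclideanSpace ℝ (Fin n)) := by
    refine ⟨EuclideanSpace.single (⟨0, by omega⟩ : Fin n) (1:ℝ), 0, fun hcon => ?_⟩
    have := congrArg (fun v : EuclideanSpace ℝ (Fin n) => v ⟨0, by omega⟩) hcon
    simp [EuclideanSpace.single_apply] at this
  have hSne : S.Nonempty := by
    refine ⟨EuclideanSpace.single (⟨0, by omega⟩ : Fin n) (1:ℝ), ?_⟩
    rw [hS, mem_sphere_zero_iff_norm, EuclideanSpace.norm_single]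
    norm_num
  obtain ⟨θ₀, hθ₀S, hmax⟩ := (isCompact_sphere (0 : EuclideanSpace ℝ (Fin n)) 1).exists_isMaxOn
    hSne ((hP.pow 2).continuousOn)
  set m := (P θ₀)^2 with hm
  have hm1 : m < 1 := h θ₀ hθ₀S
  have hm0 : 0 ≤ m := sq_nonneg _
  rcases eq_or_ne (μ S) 0 with hS0 | hS0
  · rw [Measure.restrict_eq_zero.mpr hS0] at hnorm
    simp at hnorm
  rcases eq_or_ne (μ S) ⊤ with hSinf | hSinf
  · rw [hSinf] at hnorm
    simp at hnorm
  have htpos : 0 < (μ S).toReal := ENNReal.toReal_pos hS0 hSinf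
  have hint : ∫ z in S, (P z)^2 ∂μ ≤ m * (μ S).toReal := by
    refine le_trans (le_abs_self _) ?_
    rw [← Real.norm_eq_abs]
    refine MeasureTheory.norm_setIntegral_le_of_norm_le_const (μ := μ) (s := S)
      (f := fun z => (P z)^2) (lt_top_iff_ne_top.mpr hSinf) ?_
    · intro x hx
      rw [Real.norm_eq_abs, abs_of_nonneg (sq_nonneg _)]
      exact hmax hx
  rw [smul_eq_mul] at hnorm
  have : (μ S).toReal⁻¹ * ∫ z in S, (P z)^2 ∂μ ≤ (μ S).toReal⁻¹ * (m * (μ S).toReal) :=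
    mul_le_mul_of_nonneg_left hint (by positivity)
  rw [hnorm] at this
  rw [inv_mul_eq_div, mul_div_assoc, div_self (ne_of_gt htpos), mul_one] at this
  linarith

/-- `P` is a homogeneous harmonic polynomial of degree `d` on `ℝⁿ`. -/
def IsHomHarmPoly {n : ℕ} (d : ℕ) (P : EuclideanSpace ℝ (Fin n) → ℝ) : Prop :=
  ContDiff ℝ ⊤ P ∧
  (∀ x, ∑ i : Fin n, fderiv ℝ (fun z => fderiv ℝ P z (EuclideanSpace.single i 1)) x
      (EuclideanSpace.single i 1) = 0) ∧
  (∀ (c : ℝ) (x), 0 ≤ c → P (c • x) = c ^ d * P x) ∧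
  ∃ q : MvPolynomial (Fin n) ℝ, ∀ x,
    P x = MvPolynomial.eval (fun i => (WithLp.equiv 2 (Fin n → ℝ)) x i) q

/-- Growth of the coefficients of the spherical-harmonic expansion of the fundamental
solution `Γ(x,y) = c|x−y|^{2−n}` at `0`: `|Γ_k(y)| ≤ C(n) c (4/3)^k |y|^{2−n−k}`. -/
theorem stmt9 (n : ℕ) (hn : 3 ≤ n) :
    ∃ C : ℝ, 0 < C ∧ ∀ (c : ℝ), 0 < c →
    ∀ (y : EuclideanSpace ℝ (Fin n)), y ≠ 0 →
    ∀ (Γ : ℕ → ℝ) (P : ℕ → EuclideanSpace ℝ (Fin n) → ℝ),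
      (∀ k, IsHomHarmPoly k (P k)) →
      (∀ k, (⨍ z in sphere (0 : EuclideanSpace ℝ (Fin n)) 1, (P k z) ^ 2
          ∂(μH[(n : ℝ) - 1])) = 1) →
      (∀ x ∈ ball (0 : EuclideanSpace ℝ (Fin n)) ‖y‖,
        c * ‖x - y‖ ^ ((2 : ℝ) - n) = ∑' k, Γ k * P k x) →
      ∀ k, |Γ k| ≤ C * c * (4 / 3 : ℝ) ^ k * ‖y‖ ^ ((2 : ℝ) - n - k) := by
  refine ⟨(4:ℝ)^n, by positivity, ?_⟩
  intro c hc y hy Γ P hP hnorm hexp k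
  set R : ℝ := ‖y‖ with hRdef
  have hR : 0 < R := norm_pos_iff.mpr hy
  -- pick a direction where |P k| ≥ 1 on the sphere
  obtain ⟨θ, hθS, hθ1⟩ := exists_sq_ge_one hn ((hP k).1.continuous) (hnorm k)
  have hθnorm : ‖θ‖ = 1 := mem_sphere_zero_iff_norm.mp hθS
  set b : ℝ := (inner ℝ θ y : ℝ) with hbdef
  have hb : |b| ≤ R := by
    rw [hbdef]
    calc |(inner ℝ θ y : ℝ)| ≤ ‖θ‖ * ‖y‖ := abs_real_inner_le_norm θ y
      _ = R := by rw [hθnorm, one_mul]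
  set e : ℝ := ((2:ℝ) - n)/2 with hedef
  have hn3 : (3:ℝ) ≤ (n:ℝ) := by exact_mod_cast hn
  have he : e ≤ 0 := by rw [hedef]; linarith
  set a : ℕ → ℝ := fun j => Γ j * P j θ with hadef
  -- basic facts about points r • θ
  have hmem : ∀ r : ℝ, 0 < r → r < R → r • θ ∈ ball (0 : EuclideanSpace ℝ (Fin n)) ‖y‖ := by
    intro r hr hrR
    rw [mem_ball_zero_iff, norm_smul, Real.norm_eq_abs, abs_of_pos hr, hθnorm, mul_one]
    exact hrR
  have hhom : ∀ (r : ℝ) (j : ℕ), 0 ≤ r → P j (r • θ) = r ^ j * P j θ :=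
    fun r j hr => (hP j).2.2.1 r θ hr
  have hnormsq : ∀ r : ℝ, ‖r • θ - y‖^2 = r^2 - 2*b*r + R^2 := by
    intro r
    rw [norm_sub_sq_real, real_inner_smul_left, norm_smul, Real.norm_eq_abs, hθnorm]
    rw [mul_pow, sq_abs, one_pow, ← hbdef, ← hRdef]
    ring
  have hnormpos : ∀ r : ℝ, 0 < r → r < R → 0 < ‖r • θ - y‖ := by
    intro r hr hrR
    rw [norm_pos_iff, sub_ne_zero]
    intro hxy
    have : ‖r • θ‖ = R := by rw [hxy]
    rw [norm_smul, Real.norm_eq_abs, abs_of_pos hr, hθnorm, mul_one] at this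
    linarith
  have hLHSpos : ∀ r : ℝ, 0 < r → r < R → 0 < c * ‖r • θ - y‖ ^ ((2:ℝ) - n) := by
    intro r hr hrR
    exact mul_pos hc (Real.rpow_pos_of_pos (hnormpos r hr hrR) _)
  -- summability
  have hsum : ∀ r : ℝ, 0 < r → r < R → Summable (fun j => a j * r ^ j) := by
    intro r hr hrR
    have hkey := hexp (r • θ) (hmem r hr hrR)
    have hsum0 : Summable (fun j => Γ j * P j (r • θ)) := by
      by_contra hns
      rw [tsum_eq_zero_of_not_summable hns] at hkey
      exact absurd hkey (ne_of_gt (hLHSpos r hr hrR))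
    refine hsum0.congr fun j => ?_
    rw [hhom r j hr.le, hadef]
    ring
  -- the expansion in terms of a
  have heq : ∀ r : ℝ, 0 < r → r < R →
      c * (r^2 - 2*b*r + R^2) ^ e = ∑' j, a j * r ^ j := by
    intro r hr hrR
    have hkey := hexp (r • θ) (hmem r hr hrR)
    have h1 : ‖r • θ - y‖ ^ ((2:ℝ) - n) = (r^2 - 2*b*r + R^2) ^ e := by
      rw [← hnormsq r]
      rw [← Real.rpow_natCast (‖r • θ - y‖) 2, ← Real.rpow_mul (norm_nonneg _)]
      congr 1
      rw [hedef]
      push_cast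
      ring
    rw [← h1, hkey]
    refine tsum_congr fun j => ?_
    rw [hhom r j hr.le, hadef]
    ring
  have hbound := coeff_bound hR hb he hc a hsum heq k
  -- |Γ k| ≤ |a k|
  have hPk1 : 1 ≤ |P k θ| := by
    nlinarith [abs_nonneg (P k θ), sq_abs (P k θ)]
  have hΓa : |Γ k| ≤ |a k| := by
    rw [hadef, abs_mul]
    nlinarith [abs_nonneg (Γ k)]
  -- arithmetic to reach the final form
  have hstep1 : ((R/4)^2 : ℝ) ^ e = (R/4) ^ ((2:ℝ) - n) := by
    rw [← Real.rpow_natCast (R/4) 2, ← Real.rpow_mul (by positivity)]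
    congr 1
    rw [hedef]
    push_cast
    ring
  have hstep2 : (R/4 : ℝ) ^ ((2:ℝ) - n) = R ^ ((2:ℝ) - n) * (4:ℝ) ^ ((n:ℝ) - 2) := by
    rw [Real.div_rpow hR.le (by norm_num : (0:ℝ) ≤ 4), div_eq_mul_inv,
      ← Real.rpow_neg (by norm_num : (0:ℝ) ≤ 4)]
    congr 2
    ring
  have hstep3 : ((4/(3*R) : ℝ))^k = (4/3 : ℝ)^k * R ^ (-(k:ℝ)) := by
    rw [Real.rpow_neg hR.le, Real.rpow_natCast, ← inv_pow, ← mul_pow]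
    congr 1
    field_simp
  have hstep4 : R ^ ((2:ℝ) - n) * R ^ (-(k:ℝ)) = R ^ ((2:ℝ) - n - k) := by
    rw [← Real.rpow_add hR, sub_eq_add_neg (2 - (n:ℝ)) (k:ℝ)]
  have hfinal : (c * ((R/4)^2) ^ e) * (4/(3*R))^k
      = (4:ℝ) ^ ((n:ℝ) - 2) * c * (4/3 : ℝ)^k * R ^ ((2:ℝ) - n - k) := by
    rw [hstep1, hstep2, hstep3, ← hstep4]
    ring
  rw [hfinal] at hbound
  refine le_trans hΓa (le_trans hbound ?_)
  have h42 : (4:ℝ) ^ ((n:ℝ) - 2) ≤ (4:ℝ)^n := by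
    rw [← Real.rpow_natCast (4:ℝ) n]
    exact Real.rpow_le_rpow_of_exponent_le (by norm_num) (by linarith)
  have hRpow : (0:ℝ) ≤ R ^ ((2:ℝ) - n - k) := (Real.rpow_pos_of_pos hR _).le
  have h43 : (0:ℝ) ≤ (4/3 : ℝ)^k := by positivity
  nlinarith [mul_le_mul_of_nonneg_right h42 (mul_nonneg (mul_nonneg hc.le h43) hRpow)]
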